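/- For positive integers k, l, p and nonnegative integers m, n: z_k z_p^m ⋆̄ z_l z_p^n = Σ_{i=1}^{m} z_k (z_p^i z_l − z_p^{i-1} z_{p+l}) (z_p^{m-i} ⋆̄ z_p^n) + Σ_{i=1}^{n} z_l (z_p^i z_k − z_p^{i-1} z_{p+k}) (z_p^{n-i} ⋆̄ z_p^m) + (z_k z_l + z_l z_k − z_{k+l}) (z_p^m ⋆̄ z_p^n). -/

import Mathlib

open MonoidAlgebra Finset

abbrev H : Type := MonoidAlgebra ℚ (FreeMonoid ℕ+)

noncomputable def word (w : List ℕ+) : H := MonoidAlgebra.single (FreeMonoid.ofList w) 1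

noncomputable def z (k : ℕ+) : H := word [k]

noncomputable def st : List ℕ+ → List ℕ+ → H
  | [], w => word w
  | k :: w1, [] => word (k :: w1)
  | k :: w1, l :: w2 =>
      z k * st w1 (l :: w2) + z l * st (k :: w1) w2 + z (k + l) * st w1 w2
termination_by a b => a.length + b.length
decreasing_by all_goals (simp; try omega)
noncomputable def stbar : List ℕ+ → List ℕ+ → H
  | [], w => word w
  | k :: w1, [] => word (k :: w1)
  | k :: w1, l :: w2 =>
      z k * stbar w1 (l :: w2) + z l * stbar (k :: w1) w2 - z (k + l) * stbar w1 w2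
termination_by a b => a.length + b.length
decreasing_by all_goals (simp; try omega)

lemma word_nil : word ([] : List ℕ+) = 1 := by
  simp [word, MonoidAlgebra.one_def]

lemma word_cons (a : ℕ+) (w : List ℕ+) : word (a :: w) = z a * word w := by
  simp [word, z, MonoidAlgebra.single_mul_single]

lemma stbar_nil (w : List ℕ+) : stbar [] w = word w := by
  cases w <;> simp [stbar]

lemma stbar_nil' (w : List ℕ+) : stbar w [] = word w := by
  cases w <;> simp [stbar]

lemma stbar_cons (a b : ℕ+) (w1 w2 : List ℕ+) :
    stbar (a :: w1) (b :: w2) =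
      z a * stbar w1 (b :: w2) + z b * stbar (a :: w1) w2 - z (a + b) * stbar w1 w2 := by
  rw [stbar]

theorem stbar_comm : ∀ w1 w2 : List ℕ+, stbar w1 w2 = stbar w2 w1
  | [], w => by rw [stbar_nil, stbar_nil']
  | (k :: w1), [] => by rw [stbar_nil, stbar_nil']
  | (k :: w1), (l :: w2) => by
      rw [stbar_cons, stbar_cons, stbar_comm w1 (l :: w2), stbar_comm (k :: w1) w2,
        stbar_comm w1 w2, add_comm k l]
      abel
termination_by w1 w2 => w1.length + w2.length
decreasing_by all_goals (simp; try omega)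

lemma auxA (p l : ℕ+) (n : ℕ) : ∀ m, stbar (List.replicate m p) (l :: List.replicate n p) =
    (∑ j ∈ Finset.range m,
      (word (List.replicate (j+1) p) * z l - word (List.replicate j p) * z (p+l))
        * stbar (List.replicate (m-1-j) p) (List.replicate n p))
    + z l * stbar (List.replicate m p) (List.replicate n p)
  | 0 => by simp [stbar_nil, word_cons]
  | (m+1) => by
      have hu : stbar (List.replicate (m+1) p) (l :: List.replicate n p) =
          z p * stbar (List.replicate m p) (l :: List.replicate n p)
          + z l * stbar (List.replicate (m+1) p) (List.replicate n p)
          - z (p+l) * stbar (List.replicate m p) (List.replicate n p) := by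
        conv_lhs => rw [List.replicate_succ, stbar_cons]
        rw [← List.replicate_succ]
      rw [hu, auxA p l n m, Finset.sum_range_succ']
      rw [mul_add, Finset.mul_sum]
      have h1 : ∀ j ∈ Finset.range m,
          z p * ((word (List.replicate (j+1) p) * z l - word (List.replicate j p) * z (p+l))
            * stbar (List.replicate (m-1-j) p) (List.replicate n p))
          = (word (List.replicate (j+1+1) p) * z l - word (List.replicate (j+1) p) * z (p+l))
            * stbar (List.replicate (m+1-1-(j+1)) p) (List.replicate n p) := by
        intro j hj
        have e : m + 1 - 1 - (j+1) = m - 1 - j := by omega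
        rw [e, ← mul_assoc, mul_sub, ← mul_assoc, ← mul_assoc,
          ← word_cons, ← word_cons, ← List.replicate_succ, ← List.replicate_succ]
      rw [Finset.sum_congr rfl h1]
      have h0 : (word (List.replicate (0+1) p) * z l - word (List.replicate 0 p) * z (p+l))
            * stbar (List.replicate (m+1-1-0) p) (List.replicate n p)
          = (z p * z l - z (p+l)) * stbar (List.replicate m p) (List.replicate n p) := by
        norm_num [word_nil]
        left; left; rfl
      rw [h0, sub_mul, mul_assoc]
      abel

theorem stbar_one_one (k l p : ℕ+) (m n : ℕ) :
    stbar (k :: List.replicate m p) (l :: List.replicate n p) =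
      (∑ i ∈ Finset.Icc 1 m,
        z k * (word (List.replicate i p) * z l - word (List.replicate (i - 1) p) * z (p + l))
          * stbar (List.replicate (m - i) p) (List.replicate n p))
      + (∑ i ∈ Finset.Icc 1 n,
        z l * (word (List.replicate i p) * z k - word (List.replicate (i - 1) p) * z (p + k))
          * stbar (List.replicate (n - i) p) (List.replicate m p))
      + (z k * z l + z l * z k - z (k + l)) * stbar (List.replicate m p) (List.replicate n p) := by
  rw [stbar_cons, stbar_comm (k :: List.replicate m p) (List.replicate n p),
    auxA p l n m, auxA p k m n, ← Finset.Ico_add_one_right_eq_Icc, ← Finset.Ico_add_one_right_eq_Icc,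
    Finset.sum_Ico_eq_sum_range, Finset.sum_Ico_eq_sum_range]
  simp only [Nat.add_sub_cancel, Nat.succ_sub_one]
  rw [mul_add, mul_add, Finset.mul_sum, Finset.mul_sum]
  have h1 : ∀ j ∈ Finset.range m,
      z k * ((word (List.replicate (j+1) p) * z l - word (List.replicate j p) * z (p+l))
        * stbar (List.replicate (m-1-j) p) (List.replicate n p))
      = z k * (word (List.replicate (1+j) p) * z l - word (List.replicate (1+j-1) p) * z (p + l))
          * stbar (List.replicate (m - (1+j)) p) (List.replicate n p) := by
    intro j hj
    have e1 : 1 + j = j + 1 := by omega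
    have e2 : j + 1 - 1 = j := by omega
    have e3 : m - (j + 1) = m - 1 - j := by omega
    rw [e1, e2, e3, mul_assoc]
  have h2 : ∀ j ∈ Finset.range n,
      z l * ((word (List.replicate (j+1) p) * z k - word (List.replicate j p) * z (p+k))
        * stbar (List.replicate (n-1-j) p) (List.replicate m p))
      = z l * (word (List.replicate (1+j) p) * z k - word (List.replicate (1+j-1) p) * z (p + k))
          * stbar (List.replicate (n - (1+j)) p) (List.replicate m p) := by
    intro j hj
    have e1 : 1 + j = j + 1 := by omega
    have e2 : j + 1 - 1 = j := by omega
    have e3 : n - (j + 1) = n - 1 - j := by omega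
    rw [e1, e2, e3, mul_assoc]
  rw [Finset.sum_congr rfl h1, Finset.sum_congr rfl h2,
    stbar_comm (List.replicate n p) (List.replicate m p),
    sub_mul, add_mul, mul_assoc, mul_assoc]
  abel
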